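/- (Theorem 3.) Assume f and g are twice continuously differentiable on [0,1], f nonnegative, nonincreasing and convex on [0,1], g strictly positive, nondecreasing and concave on [0,1], R_L > f(1−x) + g(y) for all (x,y) ∈ Ω, w ≥ 0, c_l > 0, c_a > 0, and suppose the dominant-diagonal condition holds on Ω: for every (x,y) ∈ Ω, −∂²U_sl^{II}/∂x²(x,y) > g(y) + y·g'(y) and −∂²U_db^{II}/∂y²(x,y) > g(y) + y·g'(y) (the right-hand sides being the cross partials ∂²U_sl^{II}/∂(−x)∂y = ∂²U_db^{II}/∂(−x)∂y = g(y) + y·g'(y)). Then there exists a unique market share equilibrium of the wholesale-pricing market share competition game, i.e., a unique pair (x*, y*) such that x* maximizes U_sl^{II}(·, y*) over [0,1] and y* maximizes U_db^{II}(x*, ·) over [0,1], and it satisfies x* < 1/2 and x* + y* < 1. -/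

import Mathlib

open Set

section Helpers
open Filter Topology

/-- If the right-hand slopes of `f` at `a` are at most `c`, the derivative within `Icc 0 1` is ≤ c. -/
lemma deriv_le_of_slope_right {f : ℝ → ℝ} {d a c : ℝ} (ha : a ∈ Icc (0:ℝ) 1) (ha1 : a < 1)
    (hd : HasDerivWithinAt f d (Icc 0 1) a)
    (hs : ∀ t ∈ Icc (0:ℝ) 1, a < t → (f t - f a) / (t - a) ≤ c) : d ≤ c := by
  have hT : Tendsto (slope f a) (𝓝[Icc 0 1 \ {a}] a) (𝓝 d) :=
    hasDerivWithinAt_iff_tendsto_slope.1 hd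
  have hsub : Ioc a 1 ⊆ Icc 0 1 \ {a} := fun t ht =>
    ⟨⟨le_trans ha.1 ht.1.le, ht.2⟩, ne_of_gt ht.1⟩
  have hT' : Tendsto (slope f a) (𝓝[Ioc a 1] a) (𝓝 d) :=
    hT.mono_left (nhdsWithin_mono a hsub)
  have hne : (𝓝[Ioc a 1] a).NeBot := by
    rw [nhdsWithin_Ioc_eq_nhdsGT ha1]
    infer_instance
  refine le_of_tendsto hT' ?_
  filter_upwards [self_mem_nhdsWithin] with t ht
  rw [slope_def_field]
  exact hs t ⟨le_trans ha.1 ht.1.le, ht.2⟩ ht.1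

lemma deriv_ge_of_slope_left {f : ℝ → ℝ} {d a c : ℝ} (ha : a ∈ Icc (0:ℝ) 1) (ha0 : 0 < a)
    (hd : HasDerivWithinAt f d (Icc 0 1) a)
    (hs : ∀ t ∈ Icc (0:ℝ) 1, t < a → c ≤ (f t - f a) / (t - a)) : c ≤ d := by
  have hT : Tendsto (slope f a) (𝓝[Icc 0 1 \ {a}] a) (𝓝 d) :=
    hasDerivWithinAt_iff_tendsto_slope.1 hd
  have hsub : Ico 0 a ⊆ Icc 0 1 \ {a} := fun t ht =>
    ⟨⟨ht.1, le_trans ht.2.le ha.2⟩, ne_of_lt ht.2⟩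
  have hT' : Tendsto (slope f a) (𝓝[Ico 0 a] a) (𝓝 d) :=
    hT.mono_left (nhdsWithin_mono a hsub)
  have hne : (𝓝[Ico 0 a] a).NeBot := by
    rw [nhdsWithin_Ico_eq_nhdsLT ha0]
    infer_instance
  refine ge_of_tendsto hT' ?_
  filter_upwards [self_mem_nhdsWithin] with t ht
  rw [slope_def_field]
  exact hs t ⟨ht.1, le_trans ht.2.le ha.2⟩ ht.2

lemma deriv_ge_of_slope_right {f : ℝ → ℝ} {d a c : ℝ} (ha : a ∈ Icc (0:ℝ) 1) (ha1 : a < 1)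
    (hd : HasDerivWithinAt f d (Icc 0 1) a)
    (hs : ∀ t ∈ Icc (0:ℝ) 1, a < t → c ≤ (f t - f a) / (t - a)) : c ≤ d := by
  have hT : Tendsto (slope f a) (𝓝[Icc 0 1 \ {a}] a) (𝓝 d) :=
    hasDerivWithinAt_iff_tendsto_slope.1 hd
  have hsub : Ioc a 1 ⊆ Icc 0 1 \ {a} := fun t ht =>
    ⟨⟨le_trans ha.1 ht.1.le, ht.2⟩, ne_of_gt ht.1⟩
  have hT' : Tendsto (slope f a) (𝓝[Ioc a 1] a) (𝓝 d) :=
    hT.mono_left (nhdsWithin_mono a hsub)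
  have hne : (𝓝[Ioc a 1] a).NeBot := by
    rw [nhdsWithin_Ioc_eq_nhdsGT ha1]
    infer_instance
  refine ge_of_tendsto hT' ?_
  filter_upwards [self_mem_nhdsWithin] with t ht
  rw [slope_def_field]
  exact hs t ⟨le_trans ha.1 ht.1.le, ht.2⟩ ht.1

lemma deriv_le_of_slope_left {f : ℝ → ℝ} {d a c : ℝ} (ha : a ∈ Icc (0:ℝ) 1) (ha0 : 0 < a)
    (hd : HasDerivWithinAt f d (Icc 0 1) a)
    (hs : ∀ t ∈ Icc (0:ℝ) 1, t < a → (f t - f a) / (t - a) ≤ c) : d ≤ c := by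
  have hT : Tendsto (slope f a) (𝓝[Icc 0 1 \ {a}] a) (𝓝 d) :=
    hasDerivWithinAt_iff_tendsto_slope.1 hd
  have hsub : Ico 0 a ⊆ Icc 0 1 \ {a} := fun t ht =>
    ⟨⟨ht.1, le_trans ht.2.le ha.2⟩, ne_of_lt ht.2⟩
  have hT' : Tendsto (slope f a) (𝓝[Ico 0 a] a) (𝓝 d) :=
    hT.mono_left (nhdsWithin_mono a hsub)
  have hne : (𝓝[Ico 0 a] a).NeBot := by
    rw [nhdsWithin_Ico_eq_nhdsLT ha0]
    infer_instance
  refine le_of_tendsto hT' ?_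
  filter_upwards [self_mem_nhdsWithin] with t ht
  rw [slope_def_field]
  exact hs t ⟨ht.1, le_trans ht.2.le ha.2⟩ ht.2

lemma deriv_nonneg_of_monotoneOn {f : ℝ → ℝ} {d a : ℝ} (ha : a ∈ Icc (0:ℝ) 1)
    (hd : HasDerivWithinAt f d (Icc 0 1) a) (hm : MonotoneOn f (Icc 0 1)) : 0 ≤ d := by
  rcases lt_or_eq_of_le ha.2 with h1 | h1
  · refine deriv_ge_of_slope_right ha h1 hd fun t ht hat => ?_
    exact div_nonneg (sub_nonneg.2 (hm ha ht hat.le)) (sub_nonneg.2 hat.le)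
  · have h0 : (0:ℝ) < a := by rw [h1]; norm_num
    refine deriv_ge_of_slope_left ha h0 hd fun t ht hta => ?_
    exact div_nonneg_of_nonpos (sub_nonpos.2 (hm ht ha hta.le)) (sub_nonpos.2 hta.le)

lemma deriv_nonpos_of_antitoneOn {f : ℝ → ℝ} {d a : ℝ} (ha : a ∈ Icc (0:ℝ) 1)
    (hd : HasDerivWithinAt f d (Icc 0 1) a) (hm : AntitoneOn f (Icc 0 1)) : d ≤ 0 := by
  rcases lt_or_eq_of_le ha.2 with h1 | h1
  · refine deriv_le_of_slope_right ha h1 hd fun t ht hat => ?_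
    exact div_nonpos_iff.2 (Or.inr ⟨sub_nonpos.2 (hm ha ht hat.le), sub_nonneg.2 hat.le⟩)
  · have h0 : (0:ℝ) < a := by rw [h1]; norm_num
    refine deriv_le_of_slope_left ha h0 hd fun t ht hta => ?_
    exact div_nonpos_iff.2 (Or.inl ⟨sub_nonneg.2 (hm ht ha hta.le), sub_nonpos.2 hta.le⟩)

/-- Knaster–Tarski style fixed point for a monotone self-map of `[0,1]`. -/
lemma exists_fixedPoint_of_monotoneOn {F : ℝ → ℝ} (hmaps : ∀ x ∈ Icc (0:ℝ) 1, F x ∈ Icc (0:ℝ) 1)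
    (hmono : ∀ x ∈ Icc (0:ℝ) 1, ∀ y ∈ Icc (0:ℝ) 1, x ≤ y → F x ≤ F y) :
    ∃ c ∈ Icc (0:ℝ) 1, F c = c := by
  set S : Set ℝ := {x | x ∈ Icc (0:ℝ) 1 ∧ x ≤ F x} with hS
  have h0S : (0:ℝ) ∈ S := ⟨⟨le_refl 0, by norm_num⟩, (hmaps 0 ⟨le_refl 0, by norm_num⟩).1⟩
  have hbdd : BddAbove S := ⟨1, fun x hx => hx.1.2⟩
  set c := sSup S with hc
  have hcmem : c ∈ Icc (0:ℝ) 1 := ⟨le_csSup hbdd h0S, csSup_le ⟨0, h0S⟩ fun x hx => hx.1.2⟩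
  have hcF : c ≤ F c := by
    refine csSup_le ⟨0, h0S⟩ fun x hx => ?_
    exact le_trans hx.2 (hmono x hx.1 c hcmem (le_csSup hbdd hx))
  have hFc : F c ≤ c := by
    refine le_csSup hbdd ⟨hmaps c hcmem, ?_⟩
    exact hmono c hcmem (F c) (hmaps c hcmem) hcF
  exact ⟨c, hcmem, le_antisymm hFc hcF⟩

/-- Derivative of `F ∘ (fun u => a + b * u)` within a set. -/
lemma HasDerivWithinAt.comp_affine {F : ℝ → ℝ} {d a b t : ℝ} {s s' : Set ℝ}
    (hF : HasDerivWithinAt F d s' (a + b * t)) (hmaps : ∀ u ∈ s, a + b * u ∈ s') :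
    HasDerivWithinAt (fun u => F (a + b * u)) (d * b) s t := by
  have hinner : HasDerivWithinAt (fun u : ℝ => a + b * u) b s t := by
    simpa using ((hasDerivWithinAt_id t s).const_mul b).const_add a
  exact HasDerivWithinAt.comp t hF hinner hmaps

/-- Derivative of `t ↦ (t - t₀) * u t` at `t₀` when `u` is merely continuous there. -/
lemma hasDerivWithinAt_sub_mul_of_continuous {u : ℝ → ℝ} {t0 : ℝ} {s : Set ℝ}
    (hu : ContinuousWithinAt u s t0) :
    HasDerivWithinAt (fun t => (t - t0) * u t) (u t0) s t0 := by
  rw [hasDerivWithinAt_iff_tendsto_slope]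
  have : Tendsto u (𝓝[s \ {t0}] t0) (𝓝 (u t0)) :=
    hu.tendsto.mono_left (nhdsWithin_mono t0 diff_subset)
  refine this.congr' ?_
  filter_upwards [self_mem_nhdsWithin] with t ht
  have htne : t - t0 ≠ 0 := sub_ne_zero.2 ht.2
  rw [slope_def_field]
  field_simp
  ring

end Helpers

/-- The feasible set of market shares: Ω = {(x,y) : x ≥ 0, y ≥ 0, x + y ≤ 1}. -/
def Omega : Set (ℝ × ℝ) := {p | 0 ≤ p.1 ∧ 0 ≤ p.2 ∧ p.1 + p.2 ≤ 1}

/-- Leasing price as a function of market shares: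
P_l(x,y) = (1−x)(R_L − f(1−x) − g(y)) + (1−x−y)·g(y). -/
noncomputable def Pl (RL : ℝ) (f g : ℝ → ℝ) (x y : ℝ) : ℝ :=
  (1 - x) * (RL - f (1 - x) - g y) + (1 - x - y) * g y

/-- Information price as a function of market shares: P_a(x,y) = (1−x−y)·g(y). -/
noncomputable def Pa (g : ℝ → ℝ) (x y : ℝ) : ℝ := (1 - x - y) * g y

/-- Licensee's market-share payoff under the revenue-sharing scheme:
U_sl(x,y) = (P_l(x,y) − c_l)·x·(1−δ). -/
noncomputable def Usl (RL : ℝ) (f g : ℝ → ℝ) (cl δ : ℝ) (x y : ℝ) : ℝ :=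
  (Pl RL f g x y - cl) * x * (1 - δ)

/-- Database's market-share payoff under the revenue-sharing scheme:
U_db(x,y) = (P_a(x,y) − c_a)·y + (P_l(x,y) − c_l)·x·δ. -/
noncomputable def Udb (RL : ℝ) (f g : ℝ → ℝ) (ca cl δ : ℝ) (x y : ℝ) : ℝ :=
  (Pa g x y - ca) * y + (Pl RL f g x y - cl) * x * δ

/-- Licensee's market-share payoff under the wholesale-pricing scheme:
U_sl^{II}(x,y) = (P_l(x,y) − w − c_l)·x. -/
noncomputable def UslII (RL : ℝ) (f g : ℝ → ℝ) (w cl : ℝ) (x y : ℝ) : ℝ :=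
  (Pl RL f g x y - w - cl) * x

/-- Database's market-share payoff under the wholesale-pricing scheme:
U_db^{II}(x,y) = P_a(x,y)·y + w·x − c_a·y. -/
noncomputable def UdbII (g : ℝ → ℝ) (w ca : ℝ) (x y : ℝ) : ℝ :=
  Pa g x y * y + w * x - ca * y

set_option maxHeartbeats 1600000 in
/-- Theorem 3: under the shape assumptions and the dominant-diagonal
condition, the wholesale-pricing market share competition game has a unique market share
equilibrium, which satisfies x* < 1/2 and x* + y* < 1. -/
theorem stmt16
    (RL : ℝ) (f g g' : ℝ → ℝ)
    (hf_C2 : ContDiffOn ℝ 2 f (Set.Icc 0 1))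
    (hf_nonneg : ∀ t ∈ Set.Icc (0:ℝ) 1, 0 ≤ f t)
    (hf_anti : AntitoneOn f (Set.Icc 0 1))
    (hf_convex : ConvexOn ℝ (Set.Icc 0 1) f)
    (hg_C2 : ContDiffOn ℝ 2 g (Set.Icc 0 1))
    (hg_pos : ∀ t ∈ Set.Icc (0:ℝ) 1, 0 < g t)
    (hg_mono : MonotoneOn g (Set.Icc 0 1))
    (hg_concave : ConcaveOn ℝ (Set.Icc 0 1) g)
    (hRL : ∀ p ∈ Omega, f (1 - p.1) + g p.2 < RL)
    (w cl ca : ℝ) (hw : 0 ≤ w) (hcl : 0 < cl) (hca : 0 < ca)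
    (hg' : ∀ t ∈ Set.Icc (0:ℝ) 1, HasDerivWithinAt g (g' t) (Set.Icc 0 1) t)
    -- first and second partial derivatives of the payoffs in own strategies
    (Uslx Uslxx Udby Udbyy : ℝ → ℝ → ℝ)
    (hUslx : ∀ y ∈ Set.Icc (0:ℝ) 1, ∀ x ∈ Set.Icc (0:ℝ) 1,
      HasDerivWithinAt (fun t => UslII RL f g w cl t y) (Uslx x y) (Set.Icc 0 1) x)
    (hUslxx : ∀ y ∈ Set.Icc (0:ℝ) 1, ∀ x ∈ Set.Icc (0:ℝ) 1,
      HasDerivWithinAt (fun t => Uslx t y) (Uslxx x y) (Set.Icc 0 1) x)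
    (hUdby : ∀ x ∈ Set.Icc (0:ℝ) 1, ∀ y ∈ Set.Icc (0:ℝ) 1,
      HasDerivWithinAt (fun t => UdbII g w ca x t) (Udby x y) (Set.Icc 0 1) y)
    (hUdbyy : ∀ x ∈ Set.Icc (0:ℝ) 1, ∀ y ∈ Set.Icc (0:ℝ) 1,
      HasDerivWithinAt (fun t => Udby x t) (Udbyy x y) (Set.Icc 0 1) y)
    -- the dominant-diagonal condition on Ω
    (hdom : ∀ p ∈ Omega,
      -Uslxx p.1 p.2 > g p.2 + p.2 * g' p.2 ∧
      -Udbyy p.1 p.2 > g p.2 + p.2 * g' p.2) :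
    ∃ xs ys : ℝ, xs ∈ Set.Icc (0:ℝ) 1 ∧ ys ∈ Set.Icc (0:ℝ) 1 ∧
      (∀ x ∈ Set.Icc (0:ℝ) 1, UslII RL f g w cl x ys ≤ UslII RL f g w cl xs ys) ∧
      (∀ y ∈ Set.Icc (0:ℝ) 1, UdbII g w ca xs y ≤ UdbII g w ca xs ys) ∧
      (∀ xs' ys' : ℝ, xs' ∈ Set.Icc (0:ℝ) 1 → ys' ∈ Set.Icc (0:ℝ) 1 →
        (∀ x ∈ Set.Icc (0:ℝ) 1, UslII RL f g w cl x ys' ≤ UslII RL f g w cl xs' ys') →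
        (∀ y ∈ Set.Icc (0:ℝ) 1, UdbII g w ca xs' y ≤ UdbII g w ca xs' ys') →
        xs' = xs ∧ ys' = ys) ∧
      xs < 1 / 2 ∧ xs + ys < 1 := by
  classical
  have h0I : (0:ℝ) ∈ Icc (0:ℝ) 1 := ⟨le_refl 0, by norm_num⟩
  have h1I : (1:ℝ) ∈ Icc (0:ℝ) 1 := ⟨by norm_num, le_refl 1⟩
  have hI : UniqueDiffOn ℝ (Icc (0:ℝ) 1) := uniqueDiffOn_Icc one_pos
  have hmem1x : ∀ x ∈ Icc (0:ℝ) 1, (1 - x) ∈ Icc (0:ℝ) 1 := fun x hx =>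
    ⟨by linarith [hx.2], by linarith [hx.1]⟩
  have hg'0 : ∀ t ∈ Icc (0:ℝ) 1, 0 ≤ g' t := fun t ht =>
    deriv_nonneg_of_monotoneOn ht (hg' t ht) hg_mono
  have hH : ∀ t ∈ Icc (0:ℝ) 1, 0 < g t + t * g' t := fun t ht =>
    add_pos_of_pos_of_nonneg (hg_pos t ht) (mul_nonneg ht.1 (hg'0 t ht))
  have hfd : DifferentiableOn ℝ f (Icc (0:ℝ) 1) := hf_C2.differentiableOn (by norm_num)
  set f1 : ℝ → ℝ := fun t => derivWithin f (Icc (0:ℝ) 1) t with hf1def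
  have hf1 : ∀ t ∈ Icc (0:ℝ) 1, HasDerivWithinAt f (f1 t) (Icc (0:ℝ) 1) t := fun t ht =>
    (hfd t ht).hasDerivWithinAt
  have hf1np : ∀ t ∈ Icc (0:ℝ) 1, f1 t ≤ 0 := fun t ht =>
    deriv_nonpos_of_antitoneOn ht (hf1 t ht) hf_anti
  have hRLpos : ∀ x ∈ Icc (0:ℝ) 1, g (1 - x) < RL - f (1 - x) := by
    intro x hx
    have := hRL (x, 1 - x) ⟨hx.1, by simp [hx.2], by simp⟩
    simp only at this
    linarith
  have hh : ∀ t ∈ Icc (0:ℝ) 1,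
      HasDerivWithinAt (fun y : ℝ => y * g y) (g t + t * g' t) (Icc (0:ℝ) 1) t := by
    intro t ht
    have := (hasDerivWithinAt_id t (Icc (0:ℝ) 1)).mul (hg' t ht)
    convert! this using 1
    simp [mul_comm]
  -- derivative formula for the licensee's payoff
  have Uslx_eq : ∀ y ∈ Icc (0:ℝ) 1, ∀ x ∈ Icc (0:ℝ) 1,
      Uslx x y = (1 - 2*x) * (RL - f (1 - x)) + x*(1 - x)*f1 (1 - x) - y * g y - (w + cl) := by
    intro y hy x hx
    have hfx : HasDerivWithinAt (fun x : ℝ => f (1 - x)) (-f1 (1 - x)) (Icc (0:ℝ) 1) x := by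
      have hinner : HasDerivWithinAt (fun u : ℝ => 1 - u) (-1) (Icc (0:ℝ) 1) x :=
        (hasDerivWithinAt_id x (Icc (0:ℝ) 1)).const_sub 1
      have := HasDerivWithinAt.comp x (hf1 (1 - x) (hmem1x x hx)) hinner
        (fun u hu => hmem1x u hu)
      simpa [Function.comp_def, mul_comm] using this
    have h1 : HasDerivWithinAt (fun u : ℝ => 1 - u) (-1) (Icc (0:ℝ) 1) x :=
      (hasDerivWithinAt_id x (Icc (0:ℝ) 1)).const_sub 1
    have h3 : HasDerivWithinAt (fun x : ℝ => RL - f (1 - x) - g y) (-(-f1 (1 - x)))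
        (Icc (0:ℝ) 1) x := (hfx.const_sub RL).sub_const (g y)
    have h4 := h1.fun_mul h3
    have h5 : HasDerivWithinAt (fun x : ℝ => 1 - x - y) (-1) (Icc (0:ℝ) 1) x :=
      h1.sub_const y
    have h6 := h5.mul_const (g y)
    have h7 := ((h4.fun_add h6).sub_const w).sub_const cl
    have h8 := h7.fun_mul (hasDerivWithinAt_id x (Icc (0:ℝ) 1))
    have hU := h8.congr (f₁ := fun t => UslII RL f g w cl t y)
      (fun t _ => by simp only [UslII, Pl, id_eq]; try ring) (by simp only [UslII, Pl, id_eq]; try ring)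
    have e1 := (hUslx y hy x hx).derivWithin (hI x hx)
    have e2 := hU.derivWithin (hI x hx)
    rw [← e1, e2]
    simp only [id_eq]
    ring
  -- derivative formula for the database's payoff
  have Udby_eq : ∀ x ∈ Icc (0:ℝ) 1, ∀ y ∈ Icc (0:ℝ) 1,
      Udby x y = -(y * g y) + (1 - x - y) * (g y + y * g' y) - ca := by
    intro x hx y hy
    have k1 : HasDerivWithinAt (fun y : ℝ => 1 - x - y) (-1) (Icc (0:ℝ) 1) y :=
      (hasDerivWithinAt_id y (Icc (0:ℝ) 1)).const_sub (1 - x)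
    have m1 := k1.fun_mul (hg' y hy)
    have m2 := m1.fun_mul (hasDerivWithinAt_id y (Icc (0:ℝ) 1))
    have m3 := (m2.add_const (w * x)).fun_sub ((hasDerivWithinAt_id y (Icc (0:ℝ) 1)).const_mul ca)
    have hU := m3.congr (f₁ := fun t => UdbII g w ca x t)
      (fun t _ => by simp only [UdbII, Pa, id_eq]; try ring) (by simp only [UdbII, Pa, id_eq]; try ring)
    have e1 := (hUdby x hx y hy).derivWithin (hI y hy)
    have e2 := hU.derivWithin (hI y hy)
    rw [← e1, e2]
    simp only [id_eq]
    ring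
  have hUslx_split : ∀ y ∈ Icc (0:ℝ) 1, ∀ x ∈ Icc (0:ℝ) 1,
      Uslx x y = Uslx x 0 - y * g y := by
    intro y hy x hx
    rw [Uslx_eq y hy x hx, Uslx_eq 0 h0I x hx]
    ring
  have hUdby_split : ∀ x ∈ Icc (0:ℝ) 1, ∀ y ∈ Icc (0:ℝ) 1,
      Udby x y = Udby 0 y - x * (g y + y * g' y) := by
    intro x hx y hy
    rw [Udby_eq x hx y hy, Udby_eq 0 h0I y hy]
    ring
  have hUslx_neg : ∀ y ∈ Icc (0:ℝ) 1, ∀ x ∈ Icc (0:ℝ) 1, 1/2 ≤ x → Uslx x y < 0 := by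
    intro y hy x hx hx2
    rw [Uslx_eq y hy x hx]
    have t1 : (1 - 2*x) * (RL - f (1 - x)) ≤ 0 :=
      mul_nonpos_of_nonpos_of_nonneg (by linarith)
        (by linarith [hRLpos x hx, hg_pos (1 - x) (hmem1x x hx)])
    have t2 : x*(1 - x)*f1 (1 - x) ≤ 0 :=
      mul_nonpos_of_nonneg_of_nonpos (mul_nonneg hx.1 (by linarith [hx.2]))
        (hf1np (1 - x) (hmem1x x hx))
    have t3 : 0 ≤ y * g y := mul_nonneg hy.1 (hg_pos y hy).le
    linarith
  have hUdby_neg : ∀ x ∈ Icc (0:ℝ) 1, ∀ y ∈ Icc (0:ℝ) 1, 1 - x ≤ y → Udby x y < 0 := by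
    intro x hx y hy hxy
    rw [Udby_eq x hx y hy]
    have t1 : 0 ≤ y * g y := mul_nonneg hy.1 (hg_pos y hy).le
    have t2 : (1 - x - y) * (g y + y * g' y) ≤ 0 :=
      mul_nonpos_of_nonpos_of_nonneg (by linarith) (hH y hy).le
    linarith
  -- first-order conditions at a maximizer of the licensee's problem
  have hFOCx : ∀ y ∈ Icc (0:ℝ) 1, ∀ x ∈ Icc (0:ℝ) 1,
      (∀ t ∈ Icc (0:ℝ) 1, UslII RL f g w cl t y ≤ UslII RL f g w cl x y) →
      x < 1/2 ∧ Uslx x y ≤ 0 ∧ (0 < x → Uslx x y = 0) := by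
    intro y hy x hx hmax
    have ha : x < 1 → Uslx x y ≤ 0 := by
      intro hx1
      refine deriv_le_of_slope_right hx hx1 (hUslx y hy x hx) fun t ht hxt => ?_
      exact div_nonpos_iff.2 (Or.inr ⟨sub_nonpos.2 (hmax t ht), by linarith⟩)
    have hb : 0 < x → 0 ≤ Uslx x y := by
      intro hx0
      refine deriv_ge_of_slope_left hx hx0 (hUslx y hy x hx) fun t ht htx => ?_
      exact div_nonneg_of_nonpos (sub_nonpos.2 (hmax t ht)) (by linarith)
    have hxne1 : x ≠ 1 := by
      intro hx1
      have h1 := hb (by rw [hx1]; norm_num)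
      have h2 := hUslx_neg y hy x hx (by rw [hx1]; norm_num)
      linarith
    have hxlt1 : x < 1 := lt_of_le_of_ne hx.2 hxne1
    have hxhalf : x < 1/2 := by
      by_contra hcon
      push_neg at hcon
      have h1 := hb (by linarith)
      have h2 := hUslx_neg y hy x hx hcon
      linarith
    exact ⟨hxhalf, ha hxlt1, fun hx0 => le_antisymm (ha hxlt1) (hb hx0)⟩
  -- first-order conditions at a maximizer of the database's problem
  have hFOCy : ∀ x ∈ Icc (0:ℝ) 1, ∀ y ∈ Icc (0:ℝ) 1,
      (∀ t ∈ Icc (0:ℝ) 1, UdbII g w ca x t ≤ UdbII g w ca x y) →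
      Udby x y ≤ 0 ∧ (0 < y → Udby x y = 0 ∧ y < 1 - x) := by
    intro x hx y hy hmax
    have ha : y < 1 → Udby x y ≤ 0 := by
      intro hy1
      refine deriv_le_of_slope_right hy hy1 (hUdby x hx y hy) fun t ht hyt => ?_
      exact div_nonpos_iff.2 (Or.inr ⟨sub_nonpos.2 (hmax t ht), by linarith⟩)
    have hb : 0 < y → 0 ≤ Udby x y := by
      intro hy0
      refine deriv_ge_of_slope_left hy hy0 (hUdby x hx y hy) fun t ht hty => ?_
      exact div_nonneg_of_nonpos (sub_nonpos.2 (hmax t ht)) (by linarith)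
    have hyne1 : y ≠ 1 := by
      intro hy1
      have h1 := hb (by rw [hy1]; norm_num)
      have h2 := hUdby_neg x hx y hy (by rw [hy1]; linarith [hx.1])
      linarith
    have hylt1 : y < 1 := lt_of_le_of_ne hy.2 hyne1
    refine ⟨ha hylt1, fun hy0 => ?_⟩
    have heq : Udby x y = 0 := le_antisymm (ha hylt1) (hb hy0)
    refine ⟨heq, ?_⟩
    by_contra hcon
    push_neg at hcon
    have := hUdby_neg x hx y hy hcon
    linarith
  -- the function x ↦ Uslx x 0 is strictly decreasing on [0,1]
  have sAnti : StrictAntiOn (fun x => Uslx x 0) (Icc (0:ℝ) 1) := by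
    refine strictAntiOn_of_deriv_neg (convex_Icc 0 1) ?_ ?_
    · exact fun x hx => ((hUslxx 0 h0I x hx).differentiableWithinAt).continuousWithinAt
    · intro x hx
      rw [interior_Icc] at hx
      have hxI : x ∈ Icc (0:ℝ) 1 := ⟨hx.1.le, hx.2.le⟩
      have hD : HasDerivAt (fun t => Uslx t 0) (Uslxx x 0) x :=
        (hUslxx 0 h0I x hxI).hasDerivAt (Icc_mem_nhds hx.1 hx.2)
      rw [hD.deriv]
      have hdom' := (hdom (x, 0) ⟨hx.1.le, le_refl 0, by simp [hx.2.le]⟩).1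
      simp only at hdom'
      have hg0 := hg_pos 0 h0I
      have : -Uslxx x 0 > g 0 + 0 * g' 0 := hdom'
      simp only [zero_mul, add_zero] at this
      linarith
  -- Udby x · is strictly decreasing on [0, 1-x]
  have sAntiY : ∀ x ∈ Icc (0:ℝ) 1, StrictAntiOn (fun t => Udby x t) (Icc 0 (1 - x)) := by
    intro x hx
    refine strictAntiOn_of_deriv_neg (convex_Icc 0 (1 - x)) ?_ ?_
    · intro t ht
      have htI : t ∈ Icc (0:ℝ) 1 := ⟨ht.1, by linarith [ht.2, hx.1]⟩
      exact (((hUdbyy x hx t htI).differentiableWithinAt).mono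
        (Icc_subset_Icc (le_refl 0) (by linarith [hx.1]))).continuousWithinAt
    · intro t ht
      rw [interior_Icc] at ht
      have htI : t ∈ Icc (0:ℝ) 1 := ⟨ht.1.le, by linarith [ht.2, hx.1]⟩
      have hD : HasDerivAt (fun s => Udby x s) (Udbyy x t) t :=
        (hUdbyy x hx t htI).hasDerivAt (Icc_mem_nhds ht.1 (by linarith [ht.2, hx.1]))
      rw [hD.deriv]
      have hdom' := (hdom (x, t) ⟨hx.1, ht.1.le, by linarith [ht.2]⟩).2
      simp only at hdom'
      linarith [hH t htI]
  -- best responses exist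
  have hmax1 : ∀ y : ℝ, ∃ x : ℝ, y ∈ Icc (0:ℝ) 1 → (x ∈ Icc (0:ℝ) 1 ∧
      ∀ t ∈ Icc (0:ℝ) 1, UslII RL f g w cl t y ≤ UslII RL f g w cl x y) := by
    intro y
    by_cases hy : y ∈ Icc (0:ℝ) 1
    · have hcont : ContinuousOn (fun x => UslII RL f g w cl x y) (Icc (0:ℝ) 1) :=
        fun x hx => ((hUslx y hy x hx).differentiableWithinAt).continuousWithinAt
      obtain ⟨x, hxmem, hxmax⟩ := isCompact_Icc.exists_isMaxOn (nonempty_Icc.2 zero_le_one) hcont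
      exact ⟨x, fun _ => ⟨hxmem, fun t ht => hxmax ht⟩⟩
    · exact ⟨0, fun h => absurd h hy⟩
  have hmax2 : ∀ x : ℝ, ∃ y : ℝ, x ∈ Icc (0:ℝ) 1 → (y ∈ Icc (0:ℝ) 1 ∧
      ∀ t ∈ Icc (0:ℝ) 1, UdbII g w ca x t ≤ UdbII g w ca x y) := by
    intro x
    by_cases hx : x ∈ Icc (0:ℝ) 1
    · have hcont : ContinuousOn (fun y => UdbII g w ca x y) (Icc (0:ℝ) 1) :=
        fun y hy => ((hUdby x hx y hy).differentiableWithinAt).continuousWithinAt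
      obtain ⟨y, hymem, hymax⟩ := isCompact_Icc.exists_isMaxOn (nonempty_Icc.2 zero_le_one) hcont
      exact ⟨y, fun _ => ⟨hymem, fun t ht => hymax ht⟩⟩
    · exact ⟨0, fun h => absurd h hx⟩
  choose BR1 hBR1 using hmax1
  choose BR2 hBR2 using hmax2
  -- BR1 is antitone
  have hBR1anti : ∀ y ∈ Icc (0:ℝ) 1, ∀ y' ∈ Icc (0:ℝ) 1, y ≤ y' → BR1 y' ≤ BR1 y := by
    intro y hy y' hy' hyy
    by_contra hcon
    push_neg at hcon
    obtain ⟨hxmem, hxmax⟩ := hBR1 y hy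
    obtain ⟨hxmem', hxmax'⟩ := hBR1 y' hy'
    obtain ⟨_, hle, heq0⟩ := hFOCx y hy (BR1 y) hxmem hxmax
    obtain ⟨_, _, heq0'⟩ := hFOCx y' hy' (BR1 y') hxmem' hxmax'
    have hpos : 0 < BR1 y' := lt_of_le_of_lt hxmem.1 hcon
    have e' : Uslx (BR1 y') y' = 0 := heq0' hpos
    rw [hUslx_split y' hy' (BR1 y') hxmem'] at e'
    have e : Uslx (BR1 y) 0 ≤ y * g y := by
      have h2 := hle
      rw [hUslx_split y hy (BR1 y) hxmem] at h2
      linarith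
    have hmono : y * g y ≤ y' * g y' :=
      le_trans (mul_le_mul_of_nonneg_right hyy (hg_pos y hy).le)
        (mul_le_mul_of_nonneg_left (hg_mono hy hy' hyy) hy'.1)
    have hanti := sAnti hxmem hxmem' hcon
    simp only at hanti
    linarith
  -- BR2 is antitone
  have hBR2anti : ∀ x ∈ Icc (0:ℝ) 1, ∀ x' ∈ Icc (0:ℝ) 1, x ≤ x' → BR2 x' ≤ BR2 x := by
    intro x hx x' hx' hxx
    by_contra hcon
    push_neg at hcon
    obtain ⟨hymem, hymax⟩ := hBR2 x hx
    obtain ⟨hymem', hymax'⟩ := hBR2 x' hx'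
    obtain ⟨hle, hpos'⟩ := hFOCy x hx (BR2 x) hymem hymax
    obtain ⟨_, hpos''⟩ := hFOCy x' hx' (BR2 x') hymem' hymax'
    have hypos : 0 < BR2 x' := lt_of_le_of_lt hymem.1 hcon
    obtain ⟨heq', hlt'⟩ := hpos'' hypos
    have hlt : BR2 x' < 1 - x := by linarith
    have hge : 0 ≤ Udby x (BR2 x') := by
      rw [hUdby_split x hx (BR2 x') hymem']
      rw [hUdby_split x' hx' (BR2 x') hymem'] at heq'
      have hHnn := (hH (BR2 x') hymem').le
      nlinarith [mul_le_mul_of_nonneg_right hxx hHnn]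
    have hanti := sAntiY x hx ⟨hymem.1, by linarith [hymem.1]⟩ ⟨hymem'.1, hlt.le⟩ hcon
    simp only at hanti
    linarith
  -- fixed point of the composed best responses
  obtain ⟨c, hcmem, hcfix⟩ : ∃ c ∈ Icc (0:ℝ) 1, BR1 (BR2 c) = c := by
    refine exists_fixedPoint_of_monotoneOn
      (fun x hx => (hBR1 (BR2 x) (hBR2 x hx).1).1) (fun x hx y hy hxy => ?_)
    exact hBR1anti (BR2 y) (hBR2 y hy).1 (BR2 x) (hBR2 x hx).1 (hBR2anti x hx y hy hxy)
  set xs := c with hxs_def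
  set ys := BR2 c with hys_def
  have hysmem : ys ∈ Icc (0:ℝ) 1 := (hBR2 c hcmem).1
  have hmaxY : ∀ t ∈ Icc (0:ℝ) 1, UdbII g w ca xs t ≤ UdbII g w ca xs ys := (hBR2 c hcmem).2
  have hmaxX : ∀ t ∈ Icc (0:ℝ) 1, UslII RL f g w cl t ys ≤ UslII RL f g w cl xs ys := by
    have h2 := (hBR1 ys hysmem).2
    rwa [hcfix] at h2
  -- location facts for an arbitrary equilibrium
  have hloc : ∀ a ∈ Icc (0:ℝ) 1, ∀ b ∈ Icc (0:ℝ) 1,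
      (∀ t ∈ Icc (0:ℝ) 1, UslII RL f g w cl t b ≤ UslII RL f g w cl a b) →
      (∀ t ∈ Icc (0:ℝ) 1, UdbII g w ca a t ≤ UdbII g w ca a b) →
      a < 1/2 ∧ a + b < 1 ∧ Uslx a b * a = 0 ∧ Uslx a b ≤ 0 ∧
        Udby a b * b = 0 ∧ Udby a b ≤ 0 := by
    intro a ha b hb hmx hmy
    obtain ⟨hahalf, hale, haeq⟩ := hFOCx b hb a ha hmx
    obtain ⟨hble, hbeq⟩ := hFOCy a ha b hb hmy
    have hsum : a + b < 1 := by
      rcases eq_or_lt_of_le hb.1 with h | h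
      · rw [← h]; linarith
      · linarith [(hbeq h).2]
    refine ⟨hahalf, hsum, ?_, hale, ?_, hble⟩
    · rcases eq_or_lt_of_le ha.1 with h | h
      · rw [← h, mul_zero]
      · rw [haeq h, zero_mul]
    · rcases eq_or_lt_of_le hb.1 with h | h
      · rw [← h, mul_zero]
      · rw [(hbeq h).1, zero_mul]
  obtain ⟨hxs_half, hxys_sum, hxseq, hxsle, hyseq, hysle⟩ :=
    hloc xs hcmem ys hysmem hmaxX hmaxY
  refine ⟨xs, ys, hcmem, hysmem, hmaxX, hmaxY, ?_, hxs_half, hxys_sum⟩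
  -- uniqueness
  intro a' b' ha' hb' hmx' hmy'
  obtain ⟨ha'_half, hab'_sum, ha'eq, ha'le, hb'eq, hb'le⟩ :=
    hloc a' ha' b' hb' hmx' hmy'
  by_contra hcon
  have hne : a' - xs ≠ 0 ∨ b' - ys ≠ 0 := by
    by_contra h2
    push_neg at h2
    exact hcon ⟨by linarith [sub_eq_zero.1 h2.1], by linarith [sub_eq_zero.1 h2.2]⟩
  set dx := a' - xs with hdx_def
  set dy := b' - ys with hdy_def
  set px : ℝ → ℝ := fun t => xs + dx * t with hpx_def
  set py : ℝ → ℝ := fun t => ys + dy * t with hpy_def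
  have hpx : ∀ t ∈ Icc (0:ℝ) 1, px t ∈ Icc (0:ℝ) 1 := by
    intro t ht
    constructor
    · simp only [hpx_def, hdx_def]
      nlinarith [hcmem.1, ha'.1, ht.1, ht.2]
    · simp only [hpx_def, hdx_def]
      nlinarith [hcmem.2, ha'.2, ht.1, ht.2]
  have hpy : ∀ t ∈ Icc (0:ℝ) 1, py t ∈ Icc (0:ℝ) 1 := by
    intro t ht
    constructor
    · simp only [hpy_def, hdy_def]
      nlinarith [hysmem.1, hb'.1, ht.1, ht.2]
    · simp only [hpy_def, hdy_def]
      nlinarith [hysmem.2, hb'.2, ht.1, ht.2]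
  have hOm : ∀ t ∈ Icc (0:ℝ) 1, (px t, py t) ∈ Omega := by
    intro t ht
    refine ⟨(hpx t ht).1, (hpy t ht).1, ?_⟩
    simp only [hpx_def, hpy_def, hdx_def, hdy_def]
    nlinarith [ht.1, ht.2, hxys_sum, hab'_sum]
  -- continuity of g'
  have hg'cont : ContinuousOn g' (Icc (0:ℝ) 1) := by
    have hc1 : ContinuousOn (derivWithin g (Icc (0:ℝ) 1)) (Icc (0:ℝ) 1) :=
      hg_C2.continuousOn_derivWithin hI (by norm_num)
    exact hc1.congr fun t ht => ((hg' t ht).derivWithin (hI t ht)).symm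
  have hgcont : ContinuousOn g (Icc (0:ℝ) 1) := hg_C2.continuousOn
  set Φ : ℝ → ℝ := fun t => Uslx (px t) (py t) * dx + Udby (px t) (py t) * dy with hPhi_def
  set D : ℝ → ℝ := fun t =>
    (Uslxx (px t) (py t) * dx - (g (py t) + py t * g' (py t)) * dy) * dx +
    (Udbyy (px t) (py t) * dy - (g (py t) + py t * g' (py t)) * dx) * dy with hD_def
  have hPhiD : ∀ t0 ∈ Icc (0:ℝ) 1, HasDerivWithinAt Φ (D t0) (Icc (0:ℝ) 1) t0 := by
    intro t0 ht0
    have hpxt0 := hpx t0 ht0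
    have hpyt0 := hpy t0 ht0
    have hA1 : HasDerivWithinAt (fun t => Uslx (px t) (py t0))
        (Uslxx (px t0) (py t0) * dx) (Icc (0:ℝ) 1) t0 :=
      HasDerivWithinAt.comp_affine (hUslxx (py t0) hpyt0 (px t0) hpxt0) hpx
    have hA2 : HasDerivWithinAt (fun t => py t * g (py t))
        ((g (py t0) + py t0 * g' (py t0)) * dy) (Icc (0:ℝ) 1) t0 :=
      HasDerivWithinAt.comp_affine (hh (py t0) hpyt0) hpy
    have hA : HasDerivWithinAt (fun t => Uslx (px t) (py t))
        (Uslxx (px t0) (py t0) * dx - (g (py t0) + py t0 * g' (py t0)) * dy)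
        (Icc (0:ℝ) 1) t0 := by
      refine ((hA1.fun_sub hA2).add_const (py t0 * g (py t0))).congr ?_ ?_
      · intro t ht
        rw [hUslx_split (py t) (hpy t ht) (px t) (hpx t ht),
          hUslx_split (py t0) hpyt0 (px t) (hpx t ht)]
        ring
      · ring
    have hB1 : HasDerivWithinAt (fun t => Udby (px t0) (py t))
        (Udbyy (px t0) (py t0) * dy) (Icc (0:ℝ) 1) t0 :=
      HasDerivWithinAt.comp_affine (hUdbyy (px t0) hpxt0 (py t0) hpyt0) hpy
    have hcu : ContinuousWithinAt
        (fun t => dx * (g (py t) + py t * g' (py t))) (Icc (0:ℝ) 1) t0 := by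
      have hpyc : ContinuousWithinAt py (Icc (0:ℝ) 1) t0 := by
        have : Continuous py := by
          rw [hpy_def]; exact continuous_const.add (continuous_mul_left dy)
        exact this.continuousWithinAt
      have hcg : ContinuousWithinAt (fun t => g (py t)) (Icc (0:ℝ) 1) t0 :=
        (hgcont (py t0) hpyt0).comp hpyc hpy
      have hcg' : ContinuousWithinAt (fun t => g' (py t)) (Icc (0:ℝ) 1) t0 :=
        (hg'cont (py t0) hpyt0).comp hpyc hpy
      exact continuousWithinAt_const.mul (hcg.add (hpyc.mul hcg'))
    have hB2 : HasDerivWithinAt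
        (fun t => (t - t0) * (dx * (g (py t) + py t * g' (py t))))
        (dx * (g (py t0) + py t0 * g' (py t0))) (Icc (0:ℝ) 1) t0 :=
      hasDerivWithinAt_sub_mul_of_continuous hcu
    have hB : HasDerivWithinAt (fun t => Udby (px t) (py t))
        (Udbyy (px t0) (py t0) * dy - dx * (g (py t0) + py t0 * g' (py t0)))
        (Icc (0:ℝ) 1) t0 := by
      have hB0 := hB1.fun_sub hB2
      refine hB0.congr ?_ ?_
      · intro t ht
        rw [hUdby_split (px t) (hpx t ht) (py t) (hpy t ht),
          hUdby_split (px t0) hpxt0 (py t) (hpy t ht)]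
        simp only [hpx_def]
        ring
      · ring
    have hsum := (hA.mul_const dx).fun_add (hB.mul_const dy)
    exact hsum.congr_deriv (by simp only [hD_def]; ring)
  have hHpos : ∀ t ∈ Icc (0:ℝ) 1, 0 < g (py t) + py t * g' (py t) :=
    fun t ht => hH (py t) (hpy t ht)
  have hDneg : ∀ t ∈ Icc (0:ℝ) 1, D t < 0 := by
    intro t ht
    have hd1 := (hdom (px t, py t) (hOm t ht)).1
    have hd2 := (hdom (px t, py t) (hOm t ht)).2
    simp only at hd1 hd2
    have hHp := hHpos t ht
    have e1 : (g (py t) + py t * g' (py t)) * dx^2 ≤ (-Uslxx (px t) (py t)) * dx^2 :=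
      mul_le_mul_of_nonneg_right (le_of_lt hd1) (sq_nonneg _)
    have e2 : (g (py t) + py t * g' (py t)) * dy^2 ≤ (-Udbyy (px t) (py t)) * dy^2 :=
      mul_le_mul_of_nonneg_right (le_of_lt hd2) (sq_nonneg _)
    have e3 : 0 ≤ (g (py t) + py t * g' (py t)) * (dx + dy)^2 :=
      mul_nonneg hHp.le (sq_nonneg _)
    simp only [hD_def]
    rcases hne with hX | hY
    · have hsq : 0 < dx^2 := by rcases hX.lt_or_gt with h | h <;> nlinarith
      have e1' : (g (py t) + py t * g' (py t)) * dx^2 < (-Uslxx (px t) (py t)) * dx^2 :=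
        mul_lt_mul_of_pos_right hd1 hsq
      nlinarith [e1', e2, e3]
    · have hsq : 0 < dy^2 := by rcases hY.lt_or_gt with h | h <;> nlinarith
      have e2' : (g (py t) + py t * g' (py t)) * dy^2 < (-Udbyy (px t) (py t)) * dy^2 :=
        mul_lt_mul_of_pos_right hd2 hsq
      nlinarith [e1, e2', e3]
  have hPhiAnti : StrictAntiOn Φ (Icc (0:ℝ) 1) := by
    refine strictAntiOn_of_deriv_neg (convex_Icc 0 1)
      (fun t ht => ((hPhiD t ht).differentiableWithinAt).continuousWithinAt) ?_
    intro t ht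
    rw [interior_Icc] at ht
    have htI : t ∈ Icc (0:ℝ) 1 := ⟨ht.1.le, ht.2.le⟩
    have hD' : HasDerivAt Φ (D t) t :=
      (hPhiD t htI).hasDerivAt (Icc_mem_nhds ht.1 ht.2)
    rw [hD'.deriv]
    exact hDneg t htI
  have hPhi0 : Φ 0 ≤ 0 := by
    have hx0 : px 0 = xs := by simp [hpx_def]
    have hy0 : py 0 = ys := by simp [hpy_def]
    simp only [hPhi_def, hx0, hy0]
    have t1 : Uslx xs ys * dx ≤ 0 := by
      have heq : Uslx xs ys * dx = Uslx xs ys * a' - Uslx xs ys * xs := by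
        simp only [hdx_def]; ring
      rw [heq, hxseq, sub_zero]
      exact mul_nonpos_of_nonpos_of_nonneg hxsle ha'.1
    have t2 : Udby xs ys * dy ≤ 0 := by
      have heq : Udby xs ys * dy = Udby xs ys * b' - Udby xs ys * ys := by
        simp only [hdy_def]; ring
      rw [heq, hyseq, sub_zero]
      exact mul_nonpos_of_nonpos_of_nonneg hysle hb'.1
    linarith
  have hPhi1 : 0 ≤ Φ 1 := by
    have hx1 : px 1 = a' := by simp [hpx_def, hdx_def]
    have hy1 : py 1 = b' := by simp [hpy_def, hdy_def]
    simp only [hPhi_def, hx1, hy1]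
    have t1 : 0 ≤ Uslx a' b' * dx := by
      have heq : Uslx a' b' * dx = Uslx a' b' * a' - Uslx a' b' * xs := by
        simp only [hdx_def]; ring
      rw [heq, ha'eq, zero_sub]
      exact neg_nonneg.2 (mul_nonpos_of_nonpos_of_nonneg ha'le hcmem.1)
    have t2 : 0 ≤ Udby a' b' * dy := by
      have heq : Udby a' b' * dy = Udby a' b' * b' - Udby a' b' * ys := by
        simp only [hdy_def]; ring
      rw [heq, hb'eq, zero_sub]
      exact neg_nonneg.2 (mul_nonpos_of_nonpos_of_nonneg hb'le hysmem.1)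
    linarith
  have hfin := hPhiAnti h0I h1I one_pos
  linarith
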